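/- If a multiplicative-weights process starts with total weight n (each of n objects has multiplicity 1), and in each step the multiplicities of at most the objects containing some point are doubled, and the total multiplicity increases by a factor of at most (1 + 1/(2t)) per step (standard MWU invariant), while each step doubles the multiplicity of some fixed set in an optimal cover of size t, then the number of steps is O(t log(n/t)). -/

import Mathlib

open Finset

/-- abstract MWU counting argument.  `n` objects have positive
integer multiplicities, all initially `1`.  There is a distinguished set `C`
of `t` objects (an optimal cover).  In each of the `k` steps, multiplicities
never decrease, the total multiplicity grows by a factor of at most
`1 + 1/(2t)`, and the multiplicity of some object of `C` is doubled.
Then the number of steps is `O(t · log (n/t))`. -/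
theorem stmt2 :
    ∃ A : ℝ, 0 < A ∧
      ∀ (ι : Type) (_ : Fintype ι) (n t k : ℕ) (C : Finset ι) (m : ℕ → ι → ℕ),
        Fintype.card ι = n → C.card = t → 1 ≤ t →
        (∀ i, m 0 i = 1) →
        (∀ j < k, ∀ i, m j i ≤ m (j + 1) i) →
        (∀ j < k, (∑ i, (m (j + 1) i : ℝ)) ≤ (1 + 1 / (2 * t)) * ∑ i, (m j i : ℝ)) →
        (∀ j < k, ∃ i ∈ C, m (j + 1) i = 2 * m j i) →
        (k : ℝ) ≤ A * t * Real.log ((n : ℝ) / t) := by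
  classical
  have hc : (0:ℝ) < Real.log 2 - 1/2 := by
    have := Real.log_two_gt_d9; norm_num at this ⊢; linarith
  refine ⟨(Real.log 2 - 1/2)⁻¹, inv_pos.mpr hc, ?_⟩
  intro ι _ n t k C m hcard hC ht h0 hmono hsum hdbl
  have htpos : (0:ℝ) < t := by exact_mod_cast ht
  have hnt : t ≤ n := by
    rw [← hC, ← hcard]; exact Finset.card_le_univ C
  have hnpos : (0:ℝ) < n := lt_of_lt_of_le htpos (by exact_mod_cast hnt)
  obtain ⟨i0, hi0⟩ : C.Nonempty := Finset.card_pos.mp (by omega)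
  have hf' : ∀ j : ℕ, ∃ i, j < k → i ∈ C ∧ m (j+1) i = 2 * m j i := by
    intro j
    by_cases hj : j < k
    · obtain ⟨i, hi, hm⟩ := hdbl j hj; exact ⟨i, fun _ => ⟨hi, hm⟩⟩
    · exact ⟨i0, fun h => absurd h hj⟩
  choose f hf using hf'
  set d : ι → ℕ := fun i => ((Finset.range k).filter (fun s => f s = i)).card with hd
  -- lower bound on multiplicities
  have hlow : ∀ j, j ≤ k → ∀ i,
      2 ^ (((Finset.range j).filter (fun s => f s = i)).card) ≤ m j i := by
    intro j
    induction j with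
    | zero => intro _ i; simp [h0 i]
    | succ j ih =>
      intro hjk i
      have hj : j < k := by omega
      have hih := ih (by omega) i
      rw [Finset.range_add_one, Finset.filter_insert]
      by_cases hfi : f j = i
      · rw [if_pos hfi]
        rw [Finset.card_insert_of_notMem (by simp)]
        have hm2 : m (j+1) i = 2 * m j i := by
          have := (hf j hj).2; rw [hfi] at this; exact this
        rw [hm2, pow_succ]
        calc 2 ^ ((Finset.range j).filter (fun s => f s = i)).card * 2
            ≤ m j i * 2 := by exact Nat.mul_le_mul_right 2 hih
          _ = 2 * m j i := by ring
      · rw [if_neg hfi]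
        exact le_trans hih (hmono j hj i)
  -- sum of fibers
  have hsumd : ∑ i ∈ C, d i = k := by
    rw [hd]
    have := Finset.card_eq_sum_card_fiberwise
      (f := f) (s := Finset.range k) (t := C)
      (fun j hj => (hf j (Finset.mem_range.mp hj)).1)
    simpa using this.symm
  -- upper bound on total weight
  have hup : ∀ j, j ≤ k → (∑ i, (m j i : ℝ)) ≤ (1 + 1/(2*(t:ℝ)))^j * n := by
    intro j
    induction j with
    | zero => intro _; simp [h0, hcard]
    | succ j ih =>
      intro hjk
      have hj : j < k := by omega
      calc (∑ i, (m (j+1) i : ℝ)) ≤ (1 + 1/(2*(t:ℝ))) * ∑ i, (m j i : ℝ) := hsum j hj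
        _ ≤ (1 + 1/(2*(t:ℝ))) * ((1 + 1/(2*(t:ℝ)))^j * n) := by
            apply mul_le_mul_of_nonneg_left (ih (by omega)); positivity
        _ = (1 + 1/(2*(t:ℝ)))^(j+1) * n := by ring
  -- AM-GM
  have hamgm : (t:ℝ) * (2:ℝ) ^ ((k:ℝ)/t) ≤ ∑ i ∈ C, ((2:ℝ) ^ (d i)) := by
    have h := Real.geom_mean_le_arith_mean_weighted C (fun _ => 1/(t:ℝ))
      (fun i => (2:ℝ) ^ (d i))
      (fun i _ => by positivity)
      (by rw [Finset.sum_const, hC, nsmul_eq_mul]; field_simp)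
      (fun i _ => by positivity)
    have hl : ∏ i ∈ C, ((2:ℝ) ^ (d i)) ^ ((1:ℝ)/t) = (2:ℝ) ^ ((k:ℝ)/t) := by
      have : ∀ i ∈ C, ((2:ℝ) ^ (d i)) ^ ((1:ℝ)/t)
          = (2:ℝ) ^ ((d i : ℝ) * (1/t)) := by
        intro i _
        rw [← Real.rpow_natCast 2 (d i), ← Real.rpow_mul (by norm_num)]
      rw [Finset.prod_congr rfl this, ← Real.rpow_sum_of_pos (by norm_num)]
      congr 1
      rw [← Finset.sum_mul, ← Nat.cast_sum, hsumd]
      ring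
    have hr : ∑ i ∈ C, (1/(t:ℝ)) * ((2:ℝ) ^ (d i))
        = (1/(t:ℝ)) * ∑ i ∈ C, ((2:ℝ) ^ (d i)) := by rw [Finset.mul_sum]
    rw [hl, hr] at h
    calc (t:ℝ) * (2:ℝ) ^ ((k:ℝ)/t)
        ≤ (t:ℝ) * ((1/(t:ℝ)) * ∑ i ∈ C, ((2:ℝ) ^ (d i))) :=
          mul_le_mul_of_nonneg_left h (le_of_lt htpos)
      _ = ∑ i ∈ C, ((2:ℝ) ^ (d i)) := by field_simp
  -- chain
  have hkey : (t:ℝ) * (2:ℝ) ^ ((k:ℝ)/t) ≤ (1 + 1/(2*(t:ℝ)))^k * n := by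
    calc (t:ℝ) * (2:ℝ) ^ ((k:ℝ)/t) ≤ ∑ i ∈ C, ((2:ℝ) ^ (d i)) := hamgm
      _ ≤ ∑ i ∈ C, (m k i : ℝ) := by
          apply Finset.sum_le_sum
          intro i _
          exact_mod_cast (by exact_mod_cast hlow k le_rfl i : ((2:ℕ) ^ (d i) : ℕ) ≤ m k i)
      _ ≤ ∑ i, (m k i : ℝ) := Finset.sum_le_sum_of_subset_of_nonneg
          (Finset.subset_univ C) (fun i _ _ => by positivity)
      _ ≤ (1 + 1/(2*(t:ℝ)))^k * n := hup k le_rfl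
  -- take logs
  have hlogs : Real.log t + ((k:ℝ)/t) * Real.log 2
      ≤ (k:ℝ) * Real.log (1 + 1/(2*(t:ℝ))) + Real.log n := by
    have h1 : (0:ℝ) < (t:ℝ) * (2:ℝ) ^ ((k:ℝ)/t) := by positivity
    have h2 := Real.log_le_log h1 hkey
    rw [Real.log_mul (ne_of_gt htpos) (by positivity),
        Real.log_rpow (by norm_num),
        Real.log_mul (by positivity) (ne_of_gt hnpos),
        Real.log_pow] at h2
    linarith
  have hlog2 : Real.log (1 + 1/(2*(t:ℝ))) ≤ 1/(2*(t:ℝ)) := by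
    have := Real.log_le_sub_one_of_pos (x := 1 + 1/(2*(t:ℝ))) (by positivity)
    linarith
  have hkfin : (k:ℝ) * (Real.log 2 - 1/2) ≤ (t:ℝ) * Real.log ((n:ℝ)/t) := by
    rw [Real.log_div (ne_of_gt hnpos) (ne_of_gt htpos)]
    have hk0 : (0:ℝ) ≤ (k:ℝ) := Nat.cast_nonneg k
    have h3 : (k:ℝ) * Real.log (1 + 1/(2*(t:ℝ))) ≤ (k:ℝ) * (1/(2*(t:ℝ))) :=
      mul_le_mul_of_nonneg_left hlog2 hk0
    have h4 : Real.log t + ((k:ℝ)/t) * Real.log 2 ≤ (k:ℝ) * (1/(2*(t:ℝ))) + Real.log n := by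
      linarith
    have h5 := mul_le_mul_of_nonneg_right h4 (le_of_lt htpos)
    have h8 : (Real.log t + (k:ℝ) / t * Real.log 2) * t
        = Real.log t * t + k * Real.log 2 := by field_simp
    have h9 : ((k:ℝ) * (1 / (2 * (t:ℝ))) + Real.log n) * t
        = (k:ℝ)/2 + Real.log n * t := by field_simp
    rw [h8, h9] at h5
    nlinarith [h5]
  calc (k:ℝ) = (Real.log 2 - 1/2)⁻¹ * ((k:ℝ) * (Real.log 2 - 1/2)) := by
        rw [mul_comm ((k:ℝ)) _, ← mul_assoc, inv_mul_cancel₀ (ne_of_gt hc), one_mul]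
    _ ≤ (Real.log 2 - 1/2)⁻¹ * ((t:ℝ) * Real.log ((n:ℝ)/t)) := by
        apply mul_le_mul_of_nonneg_left hkfin (le_of_lt (inv_pos.mpr hc))
    _ = (Real.log 2 - 1/2)⁻¹ * t * Real.log ((n:ℝ)/t) := by ring
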